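/- Every graph G satisfies VOL(G) ≤ 2^⌈log₂ MAG(G)⌉ < 2·MAG(G). That is, given an antimagic injection of G into {1,...,k}, mapping each vertex to the ⌈log₂ k⌉-bit binary representation of its label yields a hypercube drawing of G in dimension ⌈log₂ k⌉. -/

import Mathlib

open Finset

/-- A `d`-dimensional hypercube drawing of a graph `G`: an injection of the vertices
into `{0,1}^d ⊆ ℝ^d` such that the open line-segments representing distinct edges
do not cross. -/
def IsHypercubeDrawing {V : Type*} (G : SimpleGraph V) (d : ℕ) (l : V → Fin d → ℝ) : Prop :=
  (∀ v i, l v i = 0 ∨ l v i = 1) ∧ Function.Injective l ∧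
    ∀ v w x y : V, G.Adj v w → G.Adj x y → s(v, w) ≠ s(x, y) →
      ¬ (openSegment ℝ (l v) (l w) ∩ openSegment ℝ (l x) (l y)).Nonempty

/-- `VOL G`: the minimum volume `2^d` of a hypercube drawing of `G`. -/
noncomputable def VOL {V : Type*} (G : SimpleGraph V) : ℕ :=
  sInf {N | ∃ d, ∃ l : V → Fin d → ℝ, N = 2 ^ d ∧ IsHypercubeDrawing G d l}

/-- An injection `f : V(G) → ℤ⁺` is antimagic if distinct edges have distinct label sums. -/
def IsAntimagic {V : Type*} (G : SimpleGraph V) (f : V → ℕ) : Prop :=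
  ∀ v w x y : V, G.Adj v w → G.Adj x y → s(v, w) ≠ s(x, y) → f v + f w ≠ f x + f y

/-- `MAG G`: the minimum `k` such that `G` has an antimagic injection into `{1,…,k}`. -/
noncomputable def MAG {V : Type*} (G : SimpleGraph V) : ℕ :=
  sInf {k | ∃ f : V → ℕ, Function.Injective f ∧ (∀ v, f v ∈ Finset.Icc 1 k) ∧ IsAntimagic G f}

lemma sum_testBit : ∀ d m : ℕ, m < 2 ^ d → ∑ i ∈ range d, ((m.testBit i).toNat * 2 ^ i) = m := by
  intro d
  induction d with
  | zero => intro m hm; interval_cases m; simp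
  | succ d ih =>
    intro m hm
    rw [Finset.sum_range_succ']
    have h2 : m / 2 < 2 ^ d := by omega
    simp only [Nat.testBit_succ, pow_succ]
    have hs : ∑ i ∈ range d, ((m / 2).testBit i).toNat * (2 ^ i * 2)
        = (∑ i ∈ range d, ((m / 2).testBit i).toNat * 2 ^ i) * 2 := by
      rw [Finset.sum_mul]; ring_nf
    rw [hs, ih (m/2) h2, Nat.testBit_zero]
    rcases Nat.mod_two_eq_zero_or_one m with h | h <;> simp [h] <;> omega

lemma three_pow_eq {a b c d : ℕ} (hab : a ≤ b) (hcd : c ≤ d)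
    (h : 3 ^ a + 3 ^ b = 3 ^ c + 3 ^ d) : a = c ∧ b = d := by
  have key : ∀ a b c d : ℕ, a ≤ b → c ≤ d → 3 ^ a + 3 ^ b = 3 ^ c + 3 ^ d → ¬ a < c := by
    intro a b c d hab hcd h hac
    have h3 : (3:ℕ) ^ (a+1) ∣ 3 ^ c + 3 ^ d :=
      Dvd.dvd.add (pow_dvd_pow 3 (by omega)) (pow_dvd_pow 3 (by omega))
    rw [← h] at h3
    have he : 3 ^ a + 3 ^ b = 3 ^ a * (1 + 3 ^ (b - a)) := by
      have hba : a + (b - a) = b := by omega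
      rw [mul_add, mul_one, ← pow_add, hba]
    rw [he, pow_succ] at h3
    have h4 : (3:ℕ) ∣ 1 + 3 ^ (b - a) := by
      rcases h3 with ⟨k, hk⟩
      have h5 : 0 < (3:ℕ) ^ a := pow_pos (by norm_num) a
      exact ⟨k, by nlinarith⟩
    rcases Nat.eq_zero_or_pos (b - a) with h0 | h0
    · rw [h0] at h4; norm_num at h4
    · have : (3:ℕ) ∣ 3 ^ (b - a) := dvd_pow_self 3 (by omega)
      omega
  have hac : a = c := by
    rcases lt_trichotomy a c with h1 | h1 | h1
    · exact absurd h1 (key a b c d hab hcd h)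
    · exact h1
    · exact absurd h1 (key c d a b hcd hab h.symm)
  subst hac
  have : (3:ℕ) ^ b = 3 ^ d := by omega
  exact ⟨rfl, Nat.pow_right_injective (by norm_num) this⟩

lemma mag_set_nonempty {V : Type*} [Fintype V] (G : SimpleGraph V) :
    {k | ∃ f : V → ℕ, Function.Injective f ∧ (∀ v, f v ∈ Finset.Icc 1 k) ∧
      IsAntimagic G f}.Nonempty := by
  classical
  set n := Fintype.card V
  let e := Fintype.equivFin V
  set f : V → ℕ := fun v => 3 ^ ((e v : ℕ)) with hf
  refine ⟨3 ^ n, f, ?_, ?_, ?_⟩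
  · intro v w hvw
    exact e.injective (by
      have := Nat.pow_right_injective (le_refl 2 |>.trans (by norm_num)) hvw
      exact Fin.ext this)
  · intro v
    simp only [Finset.mem_Icc]
    constructor
    · exact Nat.one_le_pow _ _ (by norm_num)
    · exact Nat.pow_le_pow_right (by norm_num) (le_of_lt (e v).2)
  · intro v w x y hvw hxy hne h
    apply hne
    set a := (e v : ℕ); set b := (e w : ℕ); set c := (e x : ℕ); set d := (e y : ℕ)
    have h' : 3 ^ a + 3 ^ b = 3 ^ c + 3 ^ d := h
    have hsum : 3 ^ min a b + 3 ^ max a b = 3 ^ min c d + 3 ^ max c d := by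
      rcases le_total a b with h1 | h1 <;> rcases le_total c d with h2 | h2 <;>
        simp [min_eq_left, max_eq_right, min_eq_right, max_eq_left, h1, h2] <;> omega
    have := three_pow_eq (min_le_max) (min_le_max) hsum
    have hpair : (a = c ∧ b = d) ∨ (a = d ∧ b = c) := by omega
    have hev : ∀ p q : V, (e p : ℕ) = (e q : ℕ) → p = q := fun p q h =>
      e.injective (Fin.ext h)
    rcases hpair with ⟨h1, h2⟩ | ⟨h1, h2⟩
    · rw [hev v x h1, hev w y h2]
    · rw [hev v y h1, hev w x h2, Sym2.eq_swap]

lemma cross_sum_eq {n : ℕ} {a b c d : Fin n → ℝ}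
    (ha : ∀ i, a i = 0 ∨ a i = 1) (hb : ∀ i, b i = 0 ∨ b i = 1)
    (hc : ∀ i, c i = 0 ∨ c i = 1) (hd : ∀ i, d i = 0 ∨ d i = 1)
    (h : (openSegment ℝ a b ∩ openSegment ℝ c d).Nonempty) :
    ∀ i, a i + b i = c i + d i := by
  obtain ⟨p, ⟨t1, t2, ht1, ht2, ht, hte⟩, ⟨s1, s2, hs1, hs2, hs, hse⟩⟩ := h
  intro i
  have key := congrFun (hte.trans hse.symm) i
  simp only [Pi.add_apply, Pi.smul_apply, smul_eq_mul] at key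
  rcases ha i with h1 | h1 <;> rcases hb i with h2 | h2 <;>
    rcases hc i with h3 | h3 <;> rcases hd i with h4 | h4 <;>
    rw [h1, h2, h3, h4] at key ⊢ <;> nlinarith [key]

lemma drawing_of_antimagic {V : Type*} (G : SimpleGraph V) {k d : ℕ} (hkd : k ≤ 2 ^ d)
    {f : V → ℕ} (hinj : Function.Injective f) (hmem : ∀ v, f v ∈ Finset.Icc 1 k)
    (hanti : IsAntimagic G f) :
    IsHypercubeDrawing G d (fun v i => if (f v - 1).testBit i then 1 else 0) := by
  classical
  set l : V → Fin d → ℝ := fun v i => if (f v - 1).testBit i then 1 else 0 with hl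
  have hlt : ∀ v, f v - 1 < 2 ^ d := by
    intro v
    have := hmem v
    simp only [Finset.mem_Icc] at this
    omega
  have h01 : ∀ v i, l v i = 0 ∨ l v i = 1 := by
    intro v i
    by_cases h : (f v - 1).testBit i <;> simp [hl, h]
  have hbit : ∀ v w : V, l v = l w → ∀ i, (f v - 1).testBit i = (f w - 1).testBit i := by
    intro v w hvw i
    by_cases hi : i < d
    · have := congrFun hvw ⟨i, hi⟩
      simp only [hl] at this
      by_cases h1 : (f v - 1).testBit i <;> by_cases h2 : (f w - 1).testBit i <;>
        simp [h1, h2] at this ⊢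
    · have hv : (f v - 1).testBit i = false :=
        Nat.testBit_eq_false_of_lt (lt_of_lt_of_le (hlt v)
          (Nat.pow_le_pow_right (by norm_num) (by omega)))
      have hw : (f w - 1).testBit i = false :=
        Nat.testBit_eq_false_of_lt (lt_of_lt_of_le (hlt w)
          (Nat.pow_le_pow_right (by norm_num) (by omega)))
      rw [hv, hw]
  refine ⟨h01, ?_, ?_⟩
  · intro v w hvw
    apply hinj
    have h1 := hmem v; have h2 := hmem w
    simp only [Finset.mem_Icc] at h1 h2
    have := Nat.eq_of_testBit_eq (hbit v w hvw)
    omega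
  · intro v w x y hvw hxy hne hinter
    apply hanti v w x y hvw hxy hne
    have hsum := cross_sum_eq (h01 v) (h01 w) (h01 x) (h01 y) hinter
    have hnat : ∀ i : ℕ, i < d →
        ((f v - 1).testBit i).toNat + ((f w - 1).testBit i).toNat
          = ((f x - 1).testBit i).toNat + ((f y - 1).testBit i).toNat := by
      intro i hi
      have := hsum ⟨i, hi⟩
      simp only [hl] at this
      by_cases b1 : (f v - 1).testBit i <;> by_cases b2 : (f w - 1).testBit i <;>
        by_cases b3 : (f x - 1).testBit i <;> by_cases b4 : (f y - 1).testBit i <;>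
        simp [b1, b2, b3, b4] at this ⊢ <;> norm_num at this
    have hsumnat : (f v - 1) + (f w - 1) = (f x - 1) + (f y - 1) := by
      rw [← sum_testBit d (f v - 1) (hlt v), ← sum_testBit d (f w - 1) (hlt w),
        ← sum_testBit d (f x - 1) (hlt x), ← sum_testBit d (f y - 1) (hlt y),
        ← Finset.sum_add_distrib, ← Finset.sum_add_distrib]
      apply Finset.sum_congr rfl
      intro i hi
      rw [Finset.mem_range] at hi
      have := hnat i hi
      rw [← add_mul, ← add_mul, this]
    have h1 := hmem v; have h2 := hmem w; have h3 := hmem x; have h4 := hmem y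
    simp only [Finset.mem_Icc] at h1 h2 h3 h4
    omega

lemma vol_aux {V : Type*} [Fintype V] [Nonempty V] (G : SimpleGraph V) (k : ℕ)
    (h : ∃ f : V → ℕ, Function.Injective f ∧ (∀ v, f v ∈ Finset.Icc 1 k) ∧ IsAntimagic G f) :
    VOL G ≤ 2 ^ Nat.clog 2 k ∧ 2 ^ Nat.clog 2 k < 2 * k := by
  obtain ⟨f, hinj, hIcc, hanti⟩ := h
  have hk1 : 1 ≤ k := by
    obtain ⟨v⟩ := ‹Nonempty V›
    have hv := hIcc v
    simp only [Finset.mem_Icc] at hv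
    omega
  set d := Nat.clog 2 k with hd
  have hkd : k ≤ 2 ^ d := Nat.le_pow_clog (by norm_num) k
  constructor
  · apply Nat.sInf_le
    exact ⟨d, fun v i => if (f v - 1).testBit i then 1 else 0, rfl,
      drawing_of_antimagic G hkd hinj hIcc hanti⟩
  · rcases eq_or_lt_of_le hk1 with h1 | h1
    · rw [← h1]
      simp [hd, ← h1, Nat.clog_one_right]
    · have hdpos : 0 < d := Nat.clog_pos (by norm_num) h1
      have hlt : 2 ^ (d - 1) < k := Nat.pow_pred_clog_lt_self (by norm_num) h1
      have h2 : 2 ^ d = 2 * 2 ^ (d - 1) := by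
        rw [← pow_succ']
        congr 1
        omega
      omega

/-- Every graph `G` satisfies `VOL(G) ≤ 2^⌈log₂ MAG(G)⌉ < 2 · MAG(G)`. -/
theorem vol_le_two_pow_clog_mag {V : Type*} [Fintype V] [Nonempty V] (G : SimpleGraph V) :
    VOL G ≤ 2 ^ Nat.clog 2 (MAG G) ∧ 2 ^ Nat.clog 2 (MAG G) < 2 * MAG G := by
  exact vol_aux G (MAG G) (Nat.sInf_mem (mag_set_nonempty G))
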